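/- The IRP (CLIMB) Markov chain on B-permutations with transition rates: T_k(r) → r at rate λ_{r(k)} for 1 ≤ k ≤ B-1 (swap of positions k and k+1), and S_n(r) → r at rate λ_{r(B)} for n ∉ r (replacement at position B), satisfies detailed balance with respect to the weight function w(r) = ∏_{k=1}^B λ_{r(k)}^{B+1-k}; hence π(r) = w(r)/Σ_{r'} w(r') is a reversible invariant distribution. -/

import Mathlib

open Finset

/-- IRP (CLIMB) weight function: `w r = ∏_k λ_{r k}^{B+1-k}` (1-based), i.e.
exponent `B - k` for 0-based rank `k`. -/
noncomputable def wIRP (N B : ℕ) (lam : Fin N → ℝ) (r : Fin B → Fin N) : ℝ :=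
  ∏ k : Fin B, lam (r k) ^ (B - k.val)

/-- `r` with the entries at 0-based positions `k` and `k+1` swapped. -/
def Tswap (N B : ℕ) (k : ℕ) (r : Fin B → Fin N) : Fin B → Fin N :=
  fun l =>
    if hl : l.val = k then (if h : k + 1 < B then r ⟨k + 1, h⟩ else r l)
    else if hl' : l.val = k + 1 then r ⟨k, by have := l.isLt; omega⟩
    else r l

/-- `r` with the last (0-based position `B-1`) entry replaced by `n`. -/
def Srepl (N B : ℕ) (n : Fin N) (r : Fin B → Fin N) : Fin B → Fin N :=
  fun l => if l.val = B - 1 then n else r l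

/-- The IRP (CLIMB) chain satisfies detailed balance with respect to `wIRP`:
for a promotion transition `T_k(r) → r` at rate `λ_{r(k)}` (reverse rate
`λ_{r(k+1)}`), and for an insertion transition `S_n(r) → r` at rate `λ_{r(B)}`
(reverse rate `λ_n`). -/
theorem irp_detailed_balance (N B : ℕ) (hB : 0 < B) (hBN : B < N)
    (lam : Fin N → ℝ) (hlam : ∀ n, 0 < lam n)
    (r : Fin B → Fin N) (hr : Function.Injective r) :
    (∀ k : ℕ, (hk : k + 1 < B) →
      wIRP N B lam (Tswap N B k r) * lam (r ⟨k, by omega⟩) =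
        wIRP N B lam r * lam (r ⟨k + 1, hk⟩)) ∧
    (∀ n : Fin N, (∀ l, r l ≠ n) →
      wIRP N B lam (Srepl N B n r) * lam (r ⟨B - 1, by omega⟩) =
        wIRP N B lam r * lam n) := by
  constructor
  · intro k hk
    have hkB : k < B := by omega
    set a : Fin B := ⟨k, hkB⟩ with ha
    set b : Fin B := ⟨k + 1, hk⟩ with hb
    have hab : b ≠ a := by simp [ha, hb, Fin.ext_iff]
    have hsplit : ∀ f : Fin B → ℝ,
        (∏ l, f l) = f a * (f b * ∏ l ∈ (univ.erase a).erase b, f l) := by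
      intro f
      rw [Finset.mul_prod_erase _ _ (Finset.mem_erase.2 ⟨hab, Finset.mem_univ _⟩),
        Finset.mul_prod_erase _ _ (Finset.mem_univ a)]
    have hTa : Tswap N B k r a = r b := by
      simp [Tswap, ha, hk]; rfl
    have hTb : Tswap N B k r b = r a := by
      simp [Tswap, hb]; rfl
    have hTother : ∀ l ∈ (univ.erase a).erase b, Tswap N B k r l = r l := by
      intro l hl
      simp only [Finset.mem_erase] at hl
      have h1 : l.val ≠ k := fun h => hl.2.1 (Fin.ext h)
      have h2 : l.val ≠ k + 1 := fun h => hl.1 (Fin.ext h)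
      simp only [Tswap]
      rw [dif_neg h1, dif_neg h2]
    have hprodeq : ∏ l ∈ (univ.erase a).erase b, lam (Tswap N B k r l) ^ (B - l.val)
        = ∏ l ∈ (univ.erase a).erase b, lam (r l) ^ (B - l.val) := by
      refine Finset.prod_congr rfl fun l hl => ?_
      rw [hTother l hl]
    have hexp : B - a.val = (B - b.val) + 1 := by simp [ha, hb]; omega
    unfold wIRP
    rw [hsplit, hsplit (fun l => lam (r l) ^ (B - l.val)), hprodeq, hTa, hTb, hexp]
    have : a.val = k := rfl
    simp only [ha, hb]
    ring
  · intro n hn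
    have hBB : B - 1 < B := by omega
    set a : Fin B := ⟨B - 1, hBB⟩ with ha
    have hsplit : ∀ f : Fin B → ℝ,
        (∏ l, f l) = f a * ∏ l ∈ univ.erase a, f l := by
      intro f
      rw [Finset.mul_prod_erase _ _ (Finset.mem_univ a)]
    have hSa : Srepl N B n r a = n := by simp [Srepl, ha]
    have hSother : ∀ l ∈ univ.erase a, Srepl N B n r l = r l := by
      intro l hl
      simp only [Finset.mem_erase] at hl
      have h1 : l.val ≠ B - 1 := fun h => hl.1 (Fin.ext h)
      simp [Srepl, h1]
    have hprodeq : ∏ l ∈ univ.erase a, lam (Srepl N B n r l) ^ (B - l.val)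
        = ∏ l ∈ univ.erase a, lam (r l) ^ (B - l.val) := by
      refine Finset.prod_congr rfl fun l hl => ?_
      rw [hSother l hl]
    have hexp : B - a.val = 1 := by simp [ha]; omega
    unfold wIRP
    rw [hsplit, hsplit (fun l => lam (r l) ^ (B - l.val)), hprodeq, hSa, hexp]
    ring
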